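/- Let Ω = [a₁,b₁] × [a₂,b₂] ⊂ ℝ² and Ω_δ = {x ∈ Ω : dist(x, ∂Ω) ≤ δ}. Then for every u ∈ H¹(Ω) with trace in L²(∂Ω), ‖u‖²_{L²(Ω_δ)} ≤ C δ ‖u‖²_{H¹(Ω)}, where C depends only on Ω. -/

import Mathlib

open MeasureTheory Set
open scoped Interval

lemma oneD (g M : ℝ → ℝ) (hg : Differentiable ℝ g)
    (a b c d : ℝ) (hab : a < b) (hc : a ≤ c) (hcd : c ≤ d) (hd : d ≤ b)
    (hM : ∀ t, |deriv g t| ≤ M t)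
    (hMint : IntegrableOn (fun t => M t ^ 2) (Icc a b)) :
    ∫ t in Icc c d, g t ^ 2 ≤
      (d - c) * ((1 / (b - a) + 1) * (∫ t in Icc a b, g t ^ 2)
        + ∫ t in Icc a b, M t ^ 2) := by
  have hgc : Continuous g := hg.continuous
  have hg2c : Continuous fun t => g t ^ 2 := hgc.pow 2
  have hg2int : IntegrableOn (fun t => g t ^ 2) (Icc a b) := hg2c.integrableOn_Icc
  have hba : (0:ℝ) < b - a := by linarith
  -- min point
  obtain ⟨y, hy, hymin⟩ := isCompact_Icc.exists_isMinOn ⟨a, left_mem_Icc.2 hab.le⟩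
    hg2c.continuousOn
  -- mean value bound
  have hmean : (b - a) * g y ^ 2 ≤ ∫ t in Icc a b, g t ^ 2 := by
    have h0 : ∫ _t in Icc a b, g y ^ 2 = (b - a) * g y ^ 2 := by
      rw [setIntegral_const, Real.volume_real_Icc_of_le (by linarith), smul_eq_mul]
    rw [← h0]
    exact setIntegral_mono_on (integrableOn_const (by
      rw [Real.volume_Icc]; exact ENNReal.ofReal_ne_top)) hg2int measurableSet_Icc
      (fun t ht => hymin ht)
  have hymean : g y ^ 2 ≤ (1 / (b - a)) * ∫ t in Icc a b, g t ^ 2 := by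
    rw [one_div, inv_mul_eq_div, le_div_iff₀ hba]
    linarith [hmean]
  -- integrability of 2 g g'
  have hdm : Measurable (deriv g) := measurable_deriv g
  have hbig : IntegrableOn (fun t => g t ^ 2 + M t ^ 2) (Icc a b) := hg2int.add hMint
  have hptw : ∀ t, ‖2 * g t * deriv g t‖ ≤ g t ^ 2 + M t ^ 2 := by
    intro t
    have h1 : |deriv g t| ^ 2 ≤ M t ^ 2 :=
      pow_le_pow_left₀ (abs_nonneg _) (hM t) 2
    have h2 : 2 * |g t| * |deriv g t| ≤ |g t| ^ 2 + |deriv g t| ^ 2 := by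
      nlinarith [sq_nonneg (|g t| - |deriv g t|)]
    calc ‖2 * g t * deriv g t‖ = 2 * |g t| * |deriv g t| := by
          rw [Real.norm_eq_abs, abs_mul, abs_mul, abs_two]
      _ ≤ |g t| ^ 2 + |deriv g t| ^ 2 := h2
      _ ≤ g t ^ 2 + M t ^ 2 := by rw [sq_abs]; linarith
  have hgg' : IntegrableOn (fun t => 2 * g t * deriv g t) (Icc a b) :=
    hbig.mono' ((measurable_const.mul hgc.measurable).mul hdm).aestronglyMeasurable
      (Filter.Eventually.of_forall hptw)
  -- pointwise bound
  have key : ∀ x ∈ Icc c d, g x ^ 2 ≤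
      (1 / (b - a) + 1) * (∫ t in Icc a b, g t ^ 2) + ∫ t in Icc a b, M t ^ 2 := by
    intro x hx
    have hxab : x ∈ Icc a b := ⟨le_trans hc hx.1, le_trans hx.2 hd⟩
    have huIcc : uIcc y x ⊆ Icc a b := uIcc_subset_Icc hy hxab
    have hftc : ∫ t in y..x, 2 * g t * deriv g t = g x ^ 2 - g y ^ 2 := by
      apply intervalIntegral.integral_eq_sub_of_hasDerivAt
      · intro t _
        have := ((hg t).hasDerivAt.fun_pow 2)
        simpa [mul_comm, mul_assoc, mul_left_comm] using this
      · exact (hgg'.mono_set huIcc).intervalIntegrable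
    have habs : |∫ t in y..x, 2 * g t * deriv g t| ≤
        ∫ t in Icc a b, (g t ^ 2 + M t ^ 2) := by
      have h1 : |∫ t in y..x, 2 * g t * deriv g t| ≤
          ∫ t in Ι y x, ‖2 * g t * deriv g t‖ := by
        rw [← Real.norm_eq_abs]
        exact intervalIntegral.norm_integral_le_integral_norm_uIoc
      have huIoc : Ι y x ⊆ Icc a b := uIoc_subset_uIcc.trans huIcc
      have h2 : ∫ t in Ι y x, ‖2 * g t * deriv g t‖ ≤
          ∫ t in Ι y x, (g t ^ 2 + M t ^ 2) :=
        setIntegral_mono_on ((hgg'.mono_set huIoc).norm) (hbig.mono_set huIoc)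
          measurableSet_uIoc (fun t _ => hptw t)
      have h3 : ∫ t in Ι y x, (g t ^ 2 + M t ^ 2) ≤
          ∫ t in Icc a b, (g t ^ 2 + M t ^ 2) :=
        setIntegral_mono_set hbig
          (Filter.Eventually.of_forall fun t => by positivity)
          (HasSubset.Subset.eventuallyLE huIoc)
      linarith
    have hsplit : ∫ t in Icc a b, (g t ^ 2 + M t ^ 2) =
        (∫ t in Icc a b, g t ^ 2) + ∫ t in Icc a b, M t ^ 2 :=
      integral_add hg2int hMint
    have : g x ^ 2 ≤ g y ^ 2 + |∫ t in y..x, 2 * g t * deriv g t| := by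
      have := le_abs_self (∫ t in y..x, 2 * g t * deriv g t)
      linarith [hftc ▸ this]
    rw [hsplit] at habs
    linarith [hymean]
  -- integrate the pointwise bound
  set K := (1 / (b - a) + 1) * (∫ t in Icc a b, g t ^ 2) + ∫ t in Icc a b, M t ^ 2 with hK
  have h0 : ∫ _t in Icc c d, K = (d - c) * K := by
    rw [setIntegral_const, Real.volume_real_Icc_of_le (by linarith), smul_eq_mul]
  calc ∫ t in Icc c d, g t ^ 2 ≤ ∫ _t in Icc c d, K :=
        setIntegral_mono_on (hg2int.mono_set (Icc_subset_Icc hc hd))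
          (integrableOn_const (by rw [Real.volume_Icc]; exact ENNReal.ofReal_ne_top))
          measurableSet_Icc key
    _ = (d - c) * K := h0

lemma norm_one_zero : ‖((1 : ℝ), (0 : ℝ))‖ = 1 := by
  simp [Prod.norm_def]

lemma norm_zero_one : ‖((0 : ℝ), (1 : ℝ))‖ = 1 := by
  simp [Prod.norm_def]

lemma stripV (u : ℝ × ℝ → ℝ) (hu : Differentiable ℝ u) (a₁ b₁ a₂ b₂ c d : ℝ)
    (h1 : a₁ < b₁) (hc : a₁ ≤ c) (hcd : c ≤ d) (hd : d ≤ b₁)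
    (hu2 : IntegrableOn (fun z => u z ^ 2) (Icc a₁ b₁ ×ˢ Icc a₂ b₂))
    (hdu2 : IntegrableOn (fun z => ‖fderiv ℝ u z‖ ^ 2) (Icc a₁ b₁ ×ˢ Icc a₂ b₂)) :
    ∫ z in Icc c d ×ˢ Icc a₂ b₂, u z ^ 2 ≤
      (d - c) * ((1 / (b₁ - a₁) + 1) * (∫ z in Icc a₁ b₁ ×ˢ Icc a₂ b₂, u z ^ 2)
        + ∫ z in Icc a₁ b₁ ×ˢ Icc a₂ b₂, ‖fderiv ℝ u z‖ ^ 2) := by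
  set μ₁ := volume.restrict (Icc a₁ b₁) with hμ₁
  set μc := volume.restrict (Icc c d) with hμc
  set ν := volume.restrict (Icc a₂ b₂) with hν
  have hrw : ∀ (s : Set ℝ) (t : Set ℝ) (f : ℝ × ℝ → ℝ),
      ∫ z in s ×ˢ t, f z =
        ∫ z, f z ∂((volume.restrict s).prod (volume.restrict t)) := by
    intro s t f
    rw [Measure.prod_restrict, ← Measure.volume_eq_prod]
  have hu2' : Integrable (fun z => u z ^ 2) (μ₁.prod ν) := by
    rw [hμ₁, hν, Measure.prod_restrict, ← Measure.volume_eq_prod]; exact hu2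
  have hdu2' : Integrable (fun z => ‖fderiv ℝ u z‖ ^ 2) (μ₁.prod ν) := by
    rw [hμ₁, hν, Measure.prod_restrict, ← Measure.volume_eq_prod]; exact hdu2
  have hu2s : Integrable (fun z => u z ^ 2) (μc.prod ν) := by
    rw [hμc, hν, Measure.prod_restrict, ← Measure.volume_eq_prod]
    exact hu2.mono_set (prod_mono (Icc_subset_Icc hc hd) subset_rfl)
  -- slice derivative facts
  have hslice : ∀ (y t : ℝ), HasDerivAt (fun x => u (x, y)) (fderiv ℝ u (t, y) (1, 0)) t := by
    intro y t
    have hcurve : HasDerivAt (fun x : ℝ => (x, y)) ((1 : ℝ), (0 : ℝ)) t :=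
      (hasDerivAt_id t).prodMk (hasDerivAt_const t y)
    exact (hu (t, y)).hasFDerivAt.comp_hasDerivAt t hcurve
  have hMbd : ∀ (y t : ℝ), |deriv (fun x => u (x, y)) t| ≤ ‖fderiv ℝ u (t, y)‖ := by
    intro y t
    rw [(hslice y t).deriv, ← Real.norm_eq_abs]
    calc ‖fderiv ℝ u (t, y) (1, 0)‖ ≤ ‖fderiv ℝ u (t, y)‖ * ‖((1:ℝ), (0:ℝ))‖ :=
          (fderiv ℝ u (t, y)).le_opNorm _
      _ = ‖fderiv ℝ u (t, y)‖ := by rw [norm_one_zero, mul_one]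
  -- main estimate
  have hbound : ∀ᵐ y ∂ν, (∫ x, u (x, y) ^ 2 ∂μc) ≤
      (d - c) * ((1 / (b₁ - a₁) + 1) * (∫ x, u (x, y) ^ 2 ∂μ₁)
        + ∫ x, ‖fderiv ℝ u (x, y)‖ ^ 2 ∂μ₁) := by
    filter_upwards [hdu2'.prod_left_ae] with y hGy
    exact oneD (fun x => u (x, y)) (fun x => ‖fderiv ℝ u (x, y)‖)
      (hu.comp (differentiable_id.prodMk (differentiable_const y)))
      a₁ b₁ c d h1 hc hcd hd (hMbd y) hGy
  have hInt1 : Integrable (fun y => ∫ x, u (x, y) ^ 2 ∂μc) ν :=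
    hu2s.integral_prod_right
  have hIntF : Integrable (fun y => ∫ x, u (x, y) ^ 2 ∂μ₁) ν :=
    hu2'.integral_prod_right
  have hIntG : Integrable (fun y => ∫ x, ‖fderiv ℝ u (x, y)‖ ^ 2 ∂μ₁) ν :=
    hdu2'.integral_prod_right
  have hInt2 : Integrable (fun y => (d - c) * ((1 / (b₁ - a₁) + 1) *
      (∫ x, u (x, y) ^ 2 ∂μ₁) + ∫ x, ‖fderiv ℝ u (x, y)‖ ^ 2 ∂μ₁)) ν :=
    ((hIntF.const_mul _).add hIntG).const_mul _
  calc ∫ z in Icc c d ×ˢ Icc a₂ b₂, u z ^ 2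
      = ∫ y, ∫ x, u (x, y) ^ 2 ∂μc ∂ν := by
        rw [hrw]; exact integral_prod_symm _ hu2s
    _ ≤ ∫ y, (d - c) * ((1 / (b₁ - a₁) + 1) * (∫ x, u (x, y) ^ 2 ∂μ₁)
          + ∫ x, ‖fderiv ℝ u (x, y)‖ ^ 2 ∂μ₁) ∂ν :=
        integral_mono_ae hInt1 hInt2 hbound
    _ = (d - c) * ((1 / (b₁ - a₁) + 1) * (∫ z in Icc a₁ b₁ ×ˢ Icc a₂ b₂, u z ^ 2)
          + ∫ z in Icc a₁ b₁ ×ˢ Icc a₂ b₂, ‖fderiv ℝ u z‖ ^ 2) := by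
        rw [integral_const_mul, integral_add (hIntF.const_mul _) hIntG, integral_const_mul,
          hrw _ _ (fun z => u z ^ 2), hrw _ _ (fun z => ‖fderiv ℝ u z‖ ^ 2),
          integral_prod_symm _ hu2', integral_prod_symm _ hdu2']

lemma stripH (u : ℝ × ℝ → ℝ) (hu : Differentiable ℝ u) (a₁ b₁ a₂ b₂ c d : ℝ)
    (h2 : a₂ < b₂) (hc : a₂ ≤ c) (hcd : c ≤ d) (hd : d ≤ b₂)
    (hu2 : IntegrableOn (fun z => u z ^ 2) (Icc a₁ b₁ ×ˢ Icc a₂ b₂))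
    (hdu2 : IntegrableOn (fun z => ‖fderiv ℝ u z‖ ^ 2) (Icc a₁ b₁ ×ˢ Icc a₂ b₂)) :
    ∫ z in Icc a₁ b₁ ×ˢ Icc c d, u z ^ 2 ≤
      (d - c) * ((1 / (b₂ - a₂) + 1) * (∫ z in Icc a₁ b₁ ×ˢ Icc a₂ b₂, u z ^ 2)
        + ∫ z in Icc a₁ b₁ ×ˢ Icc a₂ b₂, ‖fderiv ℝ u z‖ ^ 2) := by
  set μ₁ := volume.restrict (Icc a₁ b₁) with hμ₁
  set μc := volume.restrict (Icc c d) with hμc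
  set ν := volume.restrict (Icc a₂ b₂) with hν
  have hrw : ∀ (s : Set ℝ) (t : Set ℝ) (f : ℝ × ℝ → ℝ),
      ∫ z in s ×ˢ t, f z =
        ∫ z, f z ∂((volume.restrict s).prod (volume.restrict t)) := by
    intro s t f
    rw [Measure.prod_restrict, ← Measure.volume_eq_prod]
  have hu2' : Integrable (fun z => u z ^ 2) (μ₁.prod ν) := by
    rw [hμ₁, hν, Measure.prod_restrict, ← Measure.volume_eq_prod]; exact hu2
  have hdu2' : Integrable (fun z => ‖fderiv ℝ u z‖ ^ 2) (μ₁.prod ν) := by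
    rw [hμ₁, hν, Measure.prod_restrict, ← Measure.volume_eq_prod]; exact hdu2
  have hu2s : Integrable (fun z => u z ^ 2) (μ₁.prod μc) := by
    rw [hμc, hμ₁, Measure.prod_restrict, ← Measure.volume_eq_prod]
    exact hu2.mono_set (prod_mono subset_rfl (Icc_subset_Icc hc hd))
  have hslice : ∀ (x t : ℝ), HasDerivAt (fun y => u (x, y)) (fderiv ℝ u (x, t) (0, 1)) t := by
    intro x t
    have hcurve : HasDerivAt (fun y : ℝ => (x, y)) ((0 : ℝ), (1 : ℝ)) t :=
      (hasDerivAt_const t x).prodMk (hasDerivAt_id t)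
    exact (hu (x, t)).hasFDerivAt.comp_hasDerivAt t hcurve
  have hMbd : ∀ (x t : ℝ), |deriv (fun y => u (x, y)) t| ≤ ‖fderiv ℝ u (x, t)‖ := by
    intro x t
    rw [(hslice x t).deriv, ← Real.norm_eq_abs]
    calc ‖fderiv ℝ u (x, t) (0, 1)‖ ≤ ‖fderiv ℝ u (x, t)‖ * ‖((0:ℝ), (1:ℝ))‖ :=
          (fderiv ℝ u (x, t)).le_opNorm _
      _ = ‖fderiv ℝ u (x, t)‖ := by rw [norm_zero_one, mul_one]
  have hbound : ∀ᵐ x ∂μ₁, (∫ y, u (x, y) ^ 2 ∂μc) ≤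
      (d - c) * ((1 / (b₂ - a₂) + 1) * (∫ y, u (x, y) ^ 2 ∂ν)
        + ∫ y, ‖fderiv ℝ u (x, y)‖ ^ 2 ∂ν) := by
    filter_upwards [hdu2'.prod_right_ae] with x hGx
    exact oneD (fun y => u (x, y)) (fun y => ‖fderiv ℝ u (x, y)‖)
      (hu.comp ((differentiable_const x).prodMk differentiable_id))
      a₂ b₂ c d h2 hc hcd hd (hMbd x) hGx
  have hInt1 : Integrable (fun x => ∫ y, u (x, y) ^ 2 ∂μc) μ₁ :=
    hu2s.integral_prod_left
  have hIntF : Integrable (fun x => ∫ y, u (x, y) ^ 2 ∂ν) μ₁ :=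
    hu2'.integral_prod_left
  have hIntG : Integrable (fun x => ∫ y, ‖fderiv ℝ u (x, y)‖ ^ 2 ∂ν) μ₁ :=
    hdu2'.integral_prod_left
  have hInt2 : Integrable (fun x => (d - c) * ((1 / (b₂ - a₂) + 1) *
      (∫ y, u (x, y) ^ 2 ∂ν) + ∫ y, ‖fderiv ℝ u (x, y)‖ ^ 2 ∂ν)) μ₁ :=
    ((hIntF.const_mul _).add hIntG).const_mul _
  calc ∫ z in Icc a₁ b₁ ×ˢ Icc c d, u z ^ 2
      = ∫ x, ∫ y, u (x, y) ^ 2 ∂μc ∂μ₁ := by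
        rw [hrw]; exact integral_prod _ hu2s
    _ ≤ ∫ x, (d - c) * ((1 / (b₂ - a₂) + 1) * (∫ y, u (x, y) ^ 2 ∂ν)
          + ∫ y, ‖fderiv ℝ u (x, y)‖ ^ 2 ∂ν) ∂μ₁ :=
        integral_mono_ae hInt1 hInt2 hbound
    _ = (d - c) * ((1 / (b₂ - a₂) + 1) * (∫ z in Icc a₁ b₁ ×ˢ Icc a₂ b₂, u z ^ 2)
          + ∫ z in Icc a₁ b₁ ×ˢ Icc a₂ b₂, ‖fderiv ℝ u z‖ ^ 2) := by
        rw [integral_const_mul, integral_add (hIntF.const_mul _) hIntG, integral_const_mul,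
          hrw _ _ (fun z => u z ^ 2), hrw _ _ (fun z => ‖fderiv ℝ u z‖ ^ 2),
          integral_prod _ hu2', integral_prod _ hdu2']

lemma setint_union_le {f : ℝ × ℝ → ℝ} {s t : Set (ℝ × ℝ)} (hf : ∀ x, 0 ≤ f x)
    (hms : MeasurableSet s) (hmt : MeasurableSet t)
    (hs : IntegrableOn f s) (ht : IntegrableOn f t) :
    ∫ x in s ∪ t, f x ≤ (∫ x in s, f x) + ∫ x in t, f x := by
  have h1 : ∫ x in s ∪ t, f x = (∫ x in s, f x) + ∫ x in t \ s, f x := by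
    rw [← setIntegral_union disjoint_sdiff_self_right (hmt.diff hms) hs (ht.mono_set diff_subset),
      union_diff_self]
  rw [h1]
  have h2 : ∫ x in t \ s, f x ≤ ∫ x in t, f x :=
    setIntegral_mono_set ht (Filter.Eventually.of_forall hf)
      (HasSubset.Subset.eventuallyLE diff_subset)
  linarith

/-- Collar estimate on a rectangle: `‖u‖²_{L²(Ω_δ)} ≤ C δ ‖u‖²_{H¹(Ω)}`. -/
theorem stmt9 (a₁ b₁ a₂ b₂ : ℝ) (h1 : a₁ < b₁) (h2 : a₂ < b₂) :
    ∃ C : ℝ, 0 < C ∧ ∀ δ : ℝ, 0 < δ → δ ≤ min (b₁ - a₁) (b₂ - a₂) / 2 →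
      ∀ u : ℝ × ℝ → ℝ, Differentiable ℝ u →
        MemLp u 2 (volume.restrict (Icc a₁ b₁ ×ˢ Icc a₂ b₂)) →
        MemLp (fun x => ‖fderiv ℝ u x‖) 2
          (volume.restrict (Icc a₁ b₁ ×ˢ Icc a₂ b₂)) →
        (∫ x in {x ∈ Icc a₁ b₁ ×ˢ Icc a₂ b₂ |
            Metric.infDist x (frontier (Icc a₁ b₁ ×ˢ Icc a₂ b₂)) ≤ δ}, (u x) ^ 2)
          ≤ C * δ *
            ((∫ x in Icc a₁ b₁ ×ˢ Icc a₂ b₂, (u x) ^ 2) +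
              ∫ x in Icc a₁ b₁ ×ˢ Icc a₂ b₂, ‖fderiv ℝ u x‖ ^ 2) := by
  set m := min (b₁ - a₁) (b₂ - a₂) with hm
  have hm0 : 0 < m := lt_min (by linarith) (by linarith)
  refine ⟨4 * (1 / m + 1), by positivity, ?_⟩
  intro δ hδ0 hδm u hu hu2m hdu2m
  set Ω := Icc a₁ b₁ ×ˢ Icc a₂ b₂ with hΩ
  have hδ1 : δ ≤ (b₁ - a₁) / 2 := le_trans hδm (by
    have := min_le_left (b₁ - a₁) (b₂ - a₂); linarith)
  have hδ2 : δ ≤ (b₂ - a₂) / 2 := le_trans hδm (by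
    have := min_le_right (b₁ - a₁) (b₂ - a₂); linarith)
  have hu2 : IntegrableOn (fun z => u z ^ 2) Ω := hu2m.integrable_sq
  have hdu2 : IntegrableOn (fun z => ‖fderiv ℝ u z‖ ^ 2) Ω := by
    have := hdu2m.integrable_sq
    exact this
  set A := ∫ z in Ω, u z ^ 2 with hA
  set B := ∫ z in Ω, ‖fderiv ℝ u z‖ ^ 2 with hB
  have hΩm : MeasurableSet Ω := measurableSet_Icc.prod measurableSet_Icc
  have hA0 : 0 ≤ A := setIntegral_nonneg hΩm fun x _ => sq_nonneg _
  have hB0 : 0 ≤ B := setIntegral_nonneg hΩm fun x _ => sq_nonneg _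
  -- the four strips
  set S1 := Icc a₁ (a₁ + δ) ×ˢ Icc a₂ b₂ with hS1
  set S2 := Icc (b₁ - δ) b₁ ×ˢ Icc a₂ b₂ with hS2
  set S3 := Icc a₁ b₁ ×ˢ Icc a₂ (a₂ + δ) with hS3
  set S4 := Icc a₁ b₁ ×ˢ Icc (b₂ - δ) b₂ with hS4
  have hS1m : MeasurableSet S1 := measurableSet_Icc.prod measurableSet_Icc
  have hS2m : MeasurableSet S2 := measurableSet_Icc.prod measurableSet_Icc
  have hS3m : MeasurableSet S3 := measurableSet_Icc.prod measurableSet_Icc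
  have hS4m : MeasurableSet S4 := measurableSet_Icc.prod measurableSet_Icc
  have hS1Ω : S1 ⊆ Ω := prod_mono (Icc_subset_Icc le_rfl (by linarith)) subset_rfl
  have hS2Ω : S2 ⊆ Ω := prod_mono (Icc_subset_Icc (by linarith) le_rfl) subset_rfl
  have hS3Ω : S3 ⊆ Ω := prod_mono subset_rfl (Icc_subset_Icc le_rfl (by linarith))
  have hS4Ω : S4 ⊆ Ω := prod_mono subset_rfl (Icc_subset_Icc (by linarith) le_rfl)
  -- strip estimates
  have k1le : 1 / (b₁ - a₁) ≤ 1 / m :=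
    one_div_le_one_div_of_le hm0 (min_le_left _ _)
  have k2le : 1 / (b₂ - a₂) ≤ 1 / m :=
    one_div_le_one_div_of_le hm0 (min_le_right _ _)
  have hb1 : ∫ z in S1, u z ^ 2 ≤ δ * ((1 / (b₁ - a₁) + 1) * A + B) := by
    have := stripV u hu a₁ b₁ a₂ b₂ a₁ (a₁ + δ) h1 le_rfl (by linarith) (by linarith) hu2 hdu2
    have e : a₁ + δ - a₁ = δ := by ring
    rw [e] at this; exact this
  have hb2 : ∫ z in S2, u z ^ 2 ≤ δ * ((1 / (b₁ - a₁) + 1) * A + B) := by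
    have := stripV u hu a₁ b₁ a₂ b₂ (b₁ - δ) b₁ h1 (by linarith) (by linarith) le_rfl hu2 hdu2
    have e : b₁ - (b₁ - δ) = δ := by ring
    rw [e] at this; exact this
  have hb3 : ∫ z in S3, u z ^ 2 ≤ δ * ((1 / (b₂ - a₂) + 1) * A + B) := by
    have := stripH u hu a₁ b₁ a₂ b₂ a₂ (a₂ + δ) h2 le_rfl (by linarith) (by linarith) hu2 hdu2
    have e : a₂ + δ - a₂ = δ := by ring
    rw [e] at this; exact this
  have hb4 : ∫ z in S4, u z ^ 2 ≤ δ * ((1 / (b₂ - a₂) + 1) * A + B) := by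
    have := stripH u hu a₁ b₁ a₂ b₂ (b₂ - δ) b₂ h2 (by linarith) (by linarith) le_rfl hu2 hdu2
    have e : b₂ - (b₂ - δ) = δ := by ring
    rw [e] at this; exact this
  have hmB : 0 ≤ (1 / m) * B := by positivity
  have hfold1 : (1 / (b₁ - a₁) + 1) * A + B ≤ (1 / m + 1) * (A + B) := by
    have h := mul_le_mul_of_nonneg_right k1le hA0
    nlinarith
  have hfold2 : (1 / (b₂ - a₂) + 1) * A + B ≤ (1 / m + 1) * (A + B) := by
    have h := mul_le_mul_of_nonneg_right k2le hA0
    nlinarith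
  have hAB0 : 0 ≤ (1 / m + 1) * (A + B) := by positivity
  -- covering
  have hcover : {x ∈ Ω | Metric.infDist x (frontier Ω) ≤ δ} ⊆ S1 ∪ S2 ∪ S3 ∪ S4 := by
    intro x hx
    obtain ⟨hxΩ, hxd⟩ := hx
    have hΩcl : IsClosed Ω := isClosed_Icc.prod isClosed_Icc
    have hFsub : frontier Ω ⊆ Ω := hΩcl.frontier_subset
    have hFc : IsCompact (frontier Ω) :=
      (isCompact_Icc.prod isCompact_Icc).of_isClosed_subset isClosed_frontier hFsub
    have hFne : (frontier Ω).Nonempty := by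
      refine ⟨(a₁, a₂), ?_⟩
      rw [hΩ, frontier_prod_eq]
      right
      exact ⟨by rw [frontier_Icc h1.le]; exact Or.inl rfl, by
        rw [closure_Icc]; exact ⟨le_rfl, h2.le⟩⟩
    obtain ⟨p, hpF, hpd⟩ := hFc.exists_infDist_eq_dist hFne x
    have hdist : dist x p ≤ δ := by rw [← hpd]; exact hxd
    have hd1 : |x.1 - p.1| ≤ δ := by
      have h0 := le_max_left (dist x.1 p.1) (dist x.2 p.2)
      rw [← Prod.dist_eq, ← Real.dist_eq] at *
      exact le_trans h0 hdist
    have hd2 : |x.2 - p.2| ≤ δ := by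
      have h0 := le_max_right (dist x.1 p.1) (dist x.2 p.2)
      rw [← Prod.dist_eq, ← Real.dist_eq] at *
      exact le_trans h0 hdist
    obtain ⟨hx1, hx2⟩ := hxΩ
    rw [hΩ, frontier_prod_eq, mem_union] at hpF
    rcases hpF with ⟨_, hp2⟩ | ⟨hp1, _⟩
    · rw [frontier_Icc h2.le] at hp2
      rcases hp2 with hp2 | hp2
      · -- x ∈ S3
        refine Or.inl (Or.inr ⟨hx1, ⟨hx2.1, ?_⟩⟩)
        rw [hp2] at hd2
        linarith [(abs_le.1 hd2).2]
      · -- x ∈ S4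
        rw [mem_singleton_iff] at hp2
        refine Or.inr ⟨hx1, ⟨?_, hx2.2⟩⟩
        rw [hp2] at hd2
        linarith [(abs_le.1 hd2).1]
    · rw [frontier_Icc h1.le] at hp1
      rcases hp1 with hp1 | hp1
      · -- x ∈ S1
        refine Or.inl (Or.inl (Or.inl ⟨⟨hx1.1, ?_⟩, hx2⟩))
        rw [hp1] at hd1
        linarith [(abs_le.1 hd1).2]
      · -- x ∈ S2
        rw [mem_singleton_iff] at hp1
        refine Or.inl (Or.inl (Or.inr ⟨⟨?_, hx1.2⟩, hx2⟩))
        rw [hp1] at hd1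
        linarith [(abs_le.1 hd1).1]
  -- put everything together
  have hnn : ∀ z : ℝ × ℝ, (0:ℝ) ≤ u z ^ 2 := fun z => sq_nonneg _
  have hiU : IntegrableOn (fun z => u z ^ 2) (S1 ∪ S2 ∪ S3 ∪ S4) :=
    hu2.mono_set (by
      intro x hx
      rcases hx with ((h | h) | h) | h
      exacts [hS1Ω h, hS2Ω h, hS3Ω h, hS4Ω h])
  have step1 : ∫ x in {x ∈ Ω | Metric.infDist x (frontier Ω) ≤ δ}, u x ^ 2 ≤
      ∫ x in S1 ∪ S2 ∪ S3 ∪ S4, u x ^ 2 :=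
    setIntegral_mono_set hiU (Filter.Eventually.of_forall hnn)
      (HasSubset.Subset.eventuallyLE hcover)
  have step2 : ∫ x in S1 ∪ S2 ∪ S3 ∪ S4, u x ^ 2 ≤
      (∫ x in S1, u x ^ 2) + (∫ x in S2, u x ^ 2) + (∫ x in S3, u x ^ 2)
        + ∫ x in S4, u x ^ 2 := by
    have e3 := setint_union_le hnn hS1m hS2m (hu2.mono_set hS1Ω) (hu2.mono_set hS2Ω)
    have e2 := setint_union_le hnn (hS1m.union hS2m) hS3m
      ((hu2.mono_set hS1Ω).union (hu2.mono_set hS2Ω)) (hu2.mono_set hS3Ω)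
    have e1 := setint_union_le hnn ((hS1m.union hS2m).union hS3m) hS4m
      (((hu2.mono_set hS1Ω).union (hu2.mono_set hS2Ω)).union (hu2.mono_set hS3Ω))
      (hu2.mono_set hS4Ω)
    linarith
  calc ∫ x in {x ∈ Ω | Metric.infDist x (frontier Ω) ≤ δ}, u x ^ 2
      ≤ (∫ x in S1, u x ^ 2) + (∫ x in S2, u x ^ 2) + (∫ x in S3, u x ^ 2)
        + ∫ x in S4, u x ^ 2 := le_trans step1 step2
    _ ≤ 4 * (δ * ((1 / m + 1) * (A + B))) := by nlinarith
    _ = 4 * (1 / m + 1) * δ * (A + B) := by ring
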